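/- arXiv:1106.5677 — 2 statements merged into one kernel-verified Lean document; each statement's English description precedes it below -/
import Mathlib

section
/- Let k, c, d be natural numbers and let χ₁, …, χ_d be nonzero elements of ℤ^k. In the polynomial ring R = ℂ[y₁,…,y_c, x₁,…,x_d, z₁,…,z_d], assign each variable y_j the weight 0 ∈ ℤ^k, each x_i the weight χ_i, and each z_i the weight −χ_i, and define the weight of a monomial to be the sum, with multiplicity, of the weights of its variables. Let A ⊆ R be the ℂ-subalgebra spanned by all monomials of weight 0. Then the Krull dimension of A is at least c + d. -/
open MvPolynomial

noncomputable section

/-- The variables of the polynomial ring `R = ℂ[y₁,…,y_c, x₁,…,x_d, z₁,…,z_d]`: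
`Sum.inl j` is `y_j`, `Sum.inr (Sum.inl i)` is `x_i`, `Sum.inr (Sum.inr i)` is `z_i`. -/
abbrev SymVar (c d : ℕ) : Type := Fin c ⊕ (Fin d ⊕ Fin d)

/-- The `ℤ^k`-weight of each variable: `y_j` has weight `0`, `x_i` has weight `χ i`,
`z_i` has weight `-χ i`. -/
def varWeight (k c d : ℕ) (χ : Fin d → Fin k → ℤ) : SymVar c d → Fin k → ℤ :=
  Sum.elim (fun _ => 0) (Sum.elim (fun i => χ i) (fun i => -χ i))

/-- The weight of a monomial with exponent vector `e`: the sum, with multiplicity, of the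
weights of its variables. -/
def monWeight (k c d : ℕ) (χ : Fin d → Fin k → ℤ) (e : SymVar c d →₀ ℕ) : Fin k → ℤ :=
  e.sum fun v n => n • varWeight k c d χ v

namespace SymAux

variable (c d : ℕ)

/-- rank of a variable: `y_j ↦ j`, `x_i ↦ c + i`, `z_i ↦ c + d` (never killed). -/
def rk : SymVar c d → ℕ :=
  Sum.elim (fun j => (j : ℕ)) (Sum.elim (fun i => c + (i : ℕ)) (fun _ => c + d))

/-- Substitution killing all variables of rank `< i`. -/
def phi (i : ℕ) : MvPolynomial (SymVar c d) ℂ →ₐ[ℂ] MvPolynomial (SymVar c d) ℂ :=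
  aeval fun w => if rk c d w < i then 0 else X w

lemma phi_comp {i j : ℕ} (hij : i ≤ j) : (phi c d j).comp (phi c d i) = phi c d j := by
  apply MvPolynomial.algHom_ext
  intro w
  simp only [AlgHom.comp_apply, phi, aeval_X]
  by_cases h : rk c d w < i
  · rw [if_pos h, if_pos (lt_of_lt_of_le h hij), map_zero]
  · rw [if_neg h, aeval_X]

def Q (i : ℕ) : Ideal (MvPolynomial (SymVar c d) ℂ) := RingHom.ker (phi c d i)

instance (i : ℕ) : (Q c d i).IsPrime := RingHom.ker_isPrime _

lemma Q_mono {i j : ℕ} (hij : i ≤ j) : Q c d i ≤ Q c d j := by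
  intro p hp
  have h : phi c d j p = (phi c d j) ((phi c d i) p) := by
    conv_lhs => rw [← phi_comp c d hij]
    rfl
  simp only [Q, RingHom.mem_ker] at hp ⊢
  rw [h, hp, map_zero]

lemma monWeight_single (k : ℕ) (χ : Fin d → Fin k → ℤ) (v : SymVar c d) :
    monWeight k c d χ (Finsupp.single v 1) = varWeight k c d χ v := by
  rw [monWeight]
  exact (Finsupp.sum_single_index (h := fun v n => n • varWeight k c d χ v)
    (zero_smul ℕ (varWeight k c d χ v))).trans (one_smul ℕ _)

lemma monWeight_add (k : ℕ) (χ : Fin d → Fin k → ℤ) (e f : SymVar c d →₀ ℕ) :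
    monWeight k c d χ (e + f) = monWeight k c d χ e + monWeight k c d χ f := by
  rw [monWeight]
  exact Finsupp.sum_add_index' (fun a => zero_smul ℕ _) (fun a n m => add_smul n m _)

end SymAux

/-- If `χ₁, …, χ_d ∈ ℤ^k` are nonzero, then the ℂ-subalgebra of
`R = ℂ[y₁,…,y_c, x₁,…,x_d, z₁,…,z_d]` spanned by the monomials of weight `0`
(where `y_j` has weight `0`, `x_i` has weight `χ_i` and `z_i` has weight `-χ_i`)
has Krull dimension at least `c + d`. -/
theorem krullDim_invariant_subalgebra_ge (k c d : ℕ) (χ : Fin d → Fin k → ℤ)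
    (hχ : ∀ i, χ i ≠ 0) :
    ((c + d : ℕ) : WithBot ℕ∞) ≤
      ringKrullDim (Algebra.adjoin ℂ
        {p : MvPolynomial (SymVar c d) ℂ | ∃ e : SymVar c d →₀ ℕ,
          p = monomial e 1 ∧ monWeight k c d χ e = 0}) := by
  classical
  set A := Algebra.adjoin ℂ
    {p : MvPolynomial (SymVar c d) ℂ | ∃ e : SymVar c d →₀ ℕ,
      p = monomial e 1 ∧ monWeight k c d χ e = 0} with hA
  let P : ℕ → Ideal A := fun i => (SymAux.Q c d i).comap A.val.toRingHom
  have hPprime : ∀ i, (P i).IsPrime := fun i => Ideal.IsPrime.comap _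
  have memP : ∀ (i : ℕ) (x : A),
      x ∈ P i ↔ SymAux.phi c d i (x : MvPolynomial (SymVar c d) ℂ) = 0 := by
    intro i x; rfl
  have hstep : ∀ i < c + d, P i < P (i + 1) := by
    intro i hi
    rw [lt_iff_le_and_ne]
    constructor
    · exact fun x hx => SymAux.Q_mono c d (Nat.le_succ i) hx
    · rcases Nat.lt_or_ge i c with hic | hic
      · -- y variable
        set w : SymVar c d := Sum.inl ⟨i, hic⟩ with hw
        have hmem : (X w : MvPolynomial (SymVar c d) ℂ) ∈ A := by
          apply Algebra.subset_adjoin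
          refine ⟨Finsupp.single w 1, rfl, ?_⟩
          rw [SymAux.monWeight_single]
          simp [varWeight, hw]
        intro hEq
        have h1 : (⟨X w, hmem⟩ : A) ∈ P (i + 1) := by
          rw [memP]
          have : SymAux.rk c d w < i + 1 := by
            simp [SymAux.rk, hw]
          simp [SymAux.phi, aeval_X, this, Nat.le_of_lt_succ this]
        rw [← hEq, memP] at h1
        have h2 : ¬ SymAux.rk c d w < i := by simp [SymAux.rk, hw]
        simp only [SymAux.phi, aeval_X, if_neg h2] at h1
        exact X_ne_zero w h1
      · -- x_{i-c} * z_{i-c}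
        have hid : i - c < d := by omega
        set wx : SymVar c d := Sum.inr (Sum.inl ⟨i - c, hid⟩) with hwx
        set wz : SymVar c d := Sum.inr (Sum.inr ⟨i - c, hid⟩) with hwz
        have hxz : (X wx * X wz : MvPolynomial (SymVar c d) ℂ)
            = monomial (Finsupp.single wx 1 + Finsupp.single wz 1) 1 := by
          rw [X, X, monomial_mul, one_mul]
        have hmem : (X wx * X wz : MvPolynomial (SymVar c d) ℂ) ∈ A := by
          apply Algebra.subset_adjoin
          refine ⟨Finsupp.single wx 1 + Finsupp.single wz 1, hxz, ?_⟩
          rw [SymAux.monWeight_add, SymAux.monWeight_single, SymAux.monWeight_single]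
          simp only [varWeight, hwx, hwz, Sum.elim_inr, Sum.elim_inl]
          exact add_neg_cancel _
        intro hEq
        have h1 : (⟨X wx * X wz, hmem⟩ : A) ∈ P (i + 1) := by
          rw [memP]
          have hx : SymAux.rk c d wx < i + 1 := by
            simp only [SymAux.rk, hwx, Sum.elim_inr, Sum.elim_inl]
            omega
          simp [SymAux.phi, aeval_X, hx, Nat.le_of_lt_succ hx]
        rw [← hEq, memP] at h1
        have h2 : ¬ SymAux.rk c d wx < i := by
          simp only [SymAux.rk, hwx, Sum.elim_inr, Sum.elim_inl]; omega
        have h3 : ¬ SymAux.rk c d wz < i := by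
          simp only [SymAux.rk, hwz, Sum.elim_inr]; omega
        simp only [SymAux.phi, map_mul, aeval_X, if_neg h2, if_neg h3] at h1
        rcases mul_eq_zero.mp h1 with h | h
        · exact X_ne_zero wx h
        · exact X_ne_zero wz h
  let l : LTSeries (PrimeSpectrum A) :=
    { length := c + d
      toFun := fun i => ⟨P i, hPprime i⟩
      step := fun i => by
        show (_ : PrimeSpectrum A) < _
        rw [← PrimeSpectrum.asIdeal_lt_asIdeal]
        simpa using hstep i i.isLt }
  show ((c + d : ℕ) : WithBot ℕ∞) ≤ Order.krullDim (PrimeSpectrum A)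
  exact_mod_cast Order.LTSeries.length_le_krullDim l
end
end

section
/- Let l be a natural number and let Λ ⊆ ℕ^l be an additive submonoid that is freely generated by elements μ₁, …, μ_r (that is, every element of Λ has a unique representation as an ℕ-linear combination of μ₁, …, μ_r). Suppose there exist nonzero elements λ₁, …, λ_m ∈ Λ with pairwise disjoint supports such that every element of Λ is a ℚ-linear combination of λ₁, …, λ_m with nonnegative rational coefficients. Then the supports of μ₁, …, μ_r are pairwise disjoint; in particular, Λ is generated by elements with pairwise disjoint supports. -/
/-- Let `Λ ⊆ ℕ^l` be an additive submonoid freely generated by `μ₁, …, μ_r` (every element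
of `Λ` has a unique representation as an `ℕ`-linear combination of the `μ`'s).  Suppose
there are nonzero `λ₁, …, λ_m ∈ Λ` with pairwise disjoint supports such that every element
of `Λ` is a `ℚ`-linear combination of the `λ`'s with nonnegative rational coefficients.
Then the supports of `μ₁, …, μ_r` are pairwise disjoint; in particular, `Λ` is generated
by elements with pairwise disjoint supports. -/
theorem free_generators_have_disjoint_supports (l r m : ℕ)
    (Λ : AddSubmonoid (Fin l → ℕ)) (μ : Fin r → Fin l → ℕ)
    (hμΛ : ∀ i, μ i ∈ Λ)
    (hfree : ∀ x ∈ Λ, ∃! k : Fin r → ℕ, x = ∑ i, k i • μ i)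
    (lam : Fin m → Fin l → ℕ)
    (hlamΛ : ∀ i, lam i ∈ Λ)
    (hlamne : ∀ i, lam i ≠ 0)
    (hlamdisj : ∀ i j, i ≠ j → Disjoint {t | lam i t ≠ 0} {t | lam j t ≠ 0})
    (hcone : ∀ x ∈ Λ, ∃ q : Fin m → ℚ, (∀ i, 0 ≤ q i) ∧
      (fun t => (x t : ℚ)) = ∑ i, q i • fun t => (lam i t : ℚ)) :
    (∀ i j, i ≠ j → Disjoint {t | μ i t ≠ 0} {t | μ j t ≠ 0}) ∧
    Λ = AddSubmonoid.closure (Set.range μ) := by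
  classical
  have hμmem : ∀ k : Fin r → ℕ, (∑ i, k i • μ i) ∈ Λ := fun k =>
    sum_mem fun i _ => AddSubmonoid.nsmul_mem Λ (hμΛ i) _
  -- uniqueness of ℕ-representations
  have huniq : ∀ a b : Fin r → ℕ, (∑ i, a i • μ i) = ∑ i, b i • μ i → a = b := by
    intro a b hab
    obtain ⟨k, -, hk⟩ := hfree (∑ i, a i • μ i) (hμmem a)
    exact (hk a rfl).trans (hk b hab).symm
  -- uniqueness of nonnegative ℚ-representations
  have hQuniq : ∀ a b : Fin r → ℚ, (∀ j, 0 ≤ a j) → (∀ j, 0 ≤ b j) →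
      (∑ j, a j • fun t => (μ j t : ℚ)) = (∑ j, b j • fun t => (μ j t : ℚ)) → a = b := by
    intro a b ha hb hab
    set N : ℕ := ∏ j, (a j).den * (b j).den with hN
    have hNne : (N : ℚ) ≠ 0 := by
      have : N ≠ 0 := Finset.prod_ne_zero_iff.mpr fun j _ =>
        mul_ne_zero (a j).den_nz (b j).den_nz
      exact_mod_cast this
    have key : ∀ c : ℚ, 0 ≤ c → c.den ∣ N → ∃ C : ℕ, (C : ℚ) = N * c := by
      intro c hc ⟨k, hk⟩
      refine ⟨((k : ℤ) * c.num).toNat, ?_⟩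
      have h1 : (N : ℚ) * c = (k : ℚ) * ((c.den : ℚ) * c) := by
        rw [hk]; push_cast; ring
      have h2 : (N : ℚ) * c = (((k : ℤ) * c.num : ℤ) : ℚ) := by
        rw [h1, mul_comm (c.den : ℚ) c, Rat.mul_den_eq_num]; push_cast; ring
      have h3 : (0 : ℤ) ≤ (k : ℤ) * c.num := by
        have : (0 : ℚ) ≤ (((k : ℤ) * c.num : ℤ) : ℚ) := by
          rw [← h2]; positivity
        exact_mod_cast this
      rw [h2]
      exact_mod_cast Int.toNat_of_nonneg h3
    choose A hA using fun j => key (a j) (ha j)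
      (Dvd.dvd.trans (dvd_mul_right _ _) (Finset.dvd_prod_of_mem _ (Finset.mem_univ j)))
    choose B hB using fun j => key (b j) (hb j)
      (Dvd.dvd.trans (dvd_mul_left _ _) (Finset.dvd_prod_of_mem _ (Finset.mem_univ j)))
    have hAB : (∑ j, A j • μ j) = ∑ j, B j • μ j := by
      funext t
      have hcast : (((∑ j, A j • μ j) t : ℕ) : ℚ) = (((∑ j, B j • μ j) t : ℕ) : ℚ) := by
        have h := congrFun hab t
        simp only [Finset.sum_apply, Pi.smul_apply, smul_eq_mul] at h ⊢
        push_cast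
        calc (∑ j, (A j : ℚ) * (μ j t : ℚ))
            = ∑ j, (N : ℚ) * (a j * (μ j t : ℚ)) := by
              refine Finset.sum_congr rfl fun j _ => ?_; rw [hA j]; ring
          _ = (N : ℚ) * ∑ j, a j * (μ j t : ℚ) := by rw [Finset.mul_sum]
          _ = (N : ℚ) * ∑ j, b j * (μ j t : ℚ) := by rw [h]
          _ = ∑ j, (N : ℚ) * (b j * (μ j t : ℚ)) := by rw [Finset.mul_sum]
          _ = ∑ j, (B j : ℚ) * (μ j t : ℚ) := by
              refine Finset.sum_congr rfl fun j _ => ?_; rw [hB j]; ring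
      exact_mod_cast hcast
    have hABeq := huniq A B hAB
    funext j
    have : (N : ℚ) * a j = (N : ℚ) * b j := by
      rw [← hA j, ← hB j, hABeq]
    exact mul_left_cancel₀ hNne this
  -- coefficients of lam in terms of μ
  have hn : ∀ k, ∃ nn : Fin r → ℕ, lam k = ∑ j, nn j • μ j := by
    intro k
    obtain ⟨nn, hnn, -⟩ := hfree (lam k) (hlamΛ k)
    exact ⟨nn, hnn⟩
  choose n hnlam using hn
  -- coefficients of μ in terms of lam
  choose q hq hql using fun i => hcone (μ i) (hμΛ i)
  -- pointwise versions
  have hlampt : ∀ k t, ((lam k t : ℕ) : ℚ) = ∑ j, (n k j : ℚ) * (μ j t : ℚ) := by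
    intro k t
    conv_lhs => rw [hnlam k]
    simp [Finset.sum_apply, Pi.smul_apply]
  have hμpt : ∀ i t, ((μ i t : ℕ) : ℚ) = ∑ k, q i k * (lam k t : ℚ) := by
    intro i t
    have := congrFun (hql i) t
    simpa [Finset.sum_apply, Pi.smul_apply, smul_eq_mul] using this
  -- the composite expansion gives δ
  have hcomp : ∀ i, (fun j => ∑ k, q i k * (n k j : ℚ))
      = fun j => if j = i then (1:ℚ) else 0 := by
    intro i
    refine hQuniq _ _ (fun j => Finset.sum_nonneg fun k _ =>
      mul_nonneg (hq i k) (Nat.cast_nonneg _)) (fun j => ?_) ?_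
    · split <;> norm_num
    · funext t
      simp only [Finset.sum_apply, Pi.smul_apply, smul_eq_mul]
      calc (∑ j, (∑ k, q i k * (n k j : ℚ)) * (μ j t : ℚ))
          = ∑ j, ∑ k, q i k * ((n k j : ℚ) * (μ j t : ℚ)) := by
            refine Finset.sum_congr rfl fun j _ => ?_
            rw [Finset.sum_mul]
            exact Finset.sum_congr rfl fun k _ => by ring
        _ = ∑ k, ∑ j, q i k * ((n k j : ℚ) * (μ j t : ℚ)) := Finset.sum_comm
        _ = ∑ k, q i k * (lam k t : ℚ) := by
            refine Finset.sum_congr rfl fun k _ => ?_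
            rw [← Finset.mul_sum, hlampt k t]
        _ = (μ i t : ℚ) := (hμpt i t).symm
        _ = ∑ j, (if j = i then (1:ℚ) else 0) * (μ j t : ℚ) := by
            rw [Finset.sum_congr rfl (fun j _ => ite_mul (j = i) 1 0 ((μ j t : ℚ)))]
            simp [Finset.sum_ite_eq']
  -- orthogonality: q i k * n k j = 0 for j ≠ i
  have horth : ∀ i j, j ≠ i → ∀ k, q i k * (n k j : ℚ) = 0 := by
    intro i j hji k
    have h0 : (∑ k, q i k * (n k j : ℚ)) = 0 := by
      have := congrFun (hcomp i) j
      rwa [if_neg hji] at this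
    have := (Finset.sum_eq_zero_iff_of_nonneg fun k _ =>
      mul_nonneg (hq i k) (Nat.cast_nonneg _)).mp h0
    exact this k (Finset.mem_univ k)
  constructor
  · intro i j hij
    rw [Set.disjoint_left]
    rintro t (hti : μ i t ≠ 0) (htj : μ j t ≠ 0)
    -- find k with q i k ≠ 0 and lam k t ≠ 0
    have hfind : ∀ i' : Fin r, μ i' t ≠ 0 → ∃ k, q i' k ≠ 0 ∧ lam k t ≠ 0 := by
      intro i' hi'
      have hne : (∑ k, q i' k * (lam k t : ℚ)) ≠ 0 := by
        rw [← hμpt i' t]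
        exact_mod_cast hi'
      obtain ⟨k, -, hk⟩ := Finset.exists_ne_zero_of_sum_ne_zero hne
      refine ⟨k, ?_, ?_⟩
      · intro h; exact hk (by rw [h, zero_mul])
      · intro h; exact hk (by rw [h, Nat.cast_zero, mul_zero])
    obtain ⟨k, hqik, hlkt⟩ := hfind i hti
    obtain ⟨k', hqjk', hlk't⟩ := hfind j htj
    have hkk' : k = k' := by
      by_contra hne
      exact Set.disjoint_left.mp (hlamdisj k k' hne) hlkt hlk't
    subst hkk'
    -- show n k = 0, hence lam k = 0, contradiction
    have hnzero : ∀ j' : Fin r, n k j' = 0 := by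
      intro j'
      rcases eq_or_ne j' i with h | h
      · subst h
        have := horth j j' hij k
        have h2 : (n k j' : ℚ) = 0 := by
          rcases mul_eq_zero.mp this with h' | h'
          · exact absurd h' hqjk'
          · exact h'
        exact_mod_cast h2
      · have := horth i j' h k
        have h2 : (n k j' : ℚ) = 0 := by
          rcases mul_eq_zero.mp this with h' | h'
          · exact absurd h' hqik
          · exact h'
        exact_mod_cast h2
    have : lam k = 0 := by
      rw [hnlam k]
      refine Finset.sum_eq_zero fun j' _ => by rw [hnzero j', zero_smul]
    exact hlamne k this
  · refine le_antisymm ?_ ?_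
    · intro x hx
      obtain ⟨k, hk, -⟩ := hfree x hx
      rw [hk]
      exact sum_mem fun i _ => AddSubmonoid.nsmul_mem _
        (AddSubmonoid.subset_closure (Set.mem_range_self i)) _
    · exact (AddSubmonoid.closure_le).mpr (Set.range_subset_iff.mpr hμΛ)
end
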